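/- If G is a uniquely dimensional finite connected simple graph of order n that contains a cycle, and g is the girth of G (the length of a shortest cycle in G), then β(G) ≤ n − g + 1. -/

import Mathlib

open SimpleGraph

/-- `W` is a resolving set for `G`: any two distinct vertices are distinguished
by their distance to some vertex of `W`. -/
def IsResolvingSet {V : Type*} (G : SimpleGraph V) (W : Finset V) : Prop :=
  ∀ u v : V, u ≠ v → ∃ w ∈ W, G.dist u w ≠ G.dist v w

/-- The metric dimension of `G`: the minimum cardinality of a resolving set. -/
noncomputable def metricDim {V : Type*} (G : SimpleGraph V) : ℕ :=
  sInf {k | ∃ W : Finset V, IsResolvingSet G W ∧ W.card = k}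

/-- `B` is a metric basis: a resolving set of minimum cardinality. -/
def IsMetricBasis {V : Type*} (G : SimpleGraph V) (B : Finset V) : Prop :=
  IsResolvingSet G B ∧ B.card = metricDim G

/-- `G` is uniquely dimensional: it has exactly one metric basis. -/
def UniquelyDimensional {V : Type*} (G : SimpleGraph V) : Prop :=
  ∃! B : Finset V, IsMetricBasis G B

/-- `G` is uniquely `k`-dimensional: a unique metric basis and metric dimension `k`. -/
def UniquelyKDimensional {V : Type*} (G : SimpleGraph V) (k : ℕ) : Prop :=
  UniquelyDimensional G ∧ metricDim G = k

namespace MDAux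

/-- The distance between positions `a` and `b` on a cycle of length `g`. -/
def cycD (g a b : ℕ) : ℕ := min (max a b - min a b) (g - (max a b - min a b))

lemma cycD_comm (g a b : ℕ) : cycD g a b = cycD g b a := by unfold cycD; omega

lemma cycD_self (g a : ℕ) : cycD g a a = 0 := by unfold cycD; omega

lemma cycD_triangle {g a b m : ℕ} (ha : a < g) (hb : b < g) (hm : m < g) :
    cycD g a b ≤ cycD g a m + cycD g m b := by unfold cycD; omega

set_option maxHeartbeats 2000000 in
lemma cycD_landmark {g k i j : ℕ} (hg : 3 ≤ g) (hk : k + 1 < g) (hi : i < g) (hj : j < g)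
    (hij : i ≠ j) : cycD g i k ≠ cycD g j k ∨ cycD g i (k+1) ≠ cycD g j (k+1) := by
  unfold cycD; omega

variable {V : Type*} {G : SimpleGraph V}

lemma girth_le_of_cycle {x : V} {w : G.Walk x x} (hw : w.IsCycle) : G.girth ≤ w.length := by
  have h1 : G.egirth ≤ (w.length : ℕ∞) :=
    iInf_le_of_le x (iInf_le_of_le w (iInf_le _ hw))
  have := ENat.toNat_le_toNat h1 (by simp)
  simpa [SimpleGraph.girth] using this

lemma support_eq_range_map {x y : V} (w : G.Walk x y) :
    w.support = (List.range (w.length + 1)).map w.getVert := by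
  induction w with
  | nil => simp [SimpleGraph.Walk.getVert]
  | cons h p ih =>
    rw [SimpleGraph.Walk.length_cons, List.range_succ_eq_map (n := p.length + 1), List.map_cons,
      List.map_map, SimpleGraph.Walk.support_cons, ih]
    congr 1

/-- Injectivity of `getVert` for a cycle, on positions in `[1, length]`. -/
lemma getVert_injOn_one {a : V} {c : G.Walk a a} (hc : c.IsCycle) :
    ∀ s t, 1 ≤ s → s ≤ c.length → 1 ≤ t → t ≤ c.length →
      c.getVert s = c.getVert t → s = t := by
  have hnd : c.support.tail.Nodup := hc.support_nodup
  rw [support_eq_range_map, List.range_succ_eq_map, List.map_cons, List.map_map, List.tail_cons,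
    List.nodup_map_iff_inj_on List.nodup_range] at hnd
  intro s t hs1 hs2 ht1 ht2 h
  have := hnd (s-1) (by rw [List.mem_range]; omega) (t-1) (by rw [List.mem_range]; omega)
  simp only [Function.comp_apply] at this
  have := this (by rw [show (s - 1).succ = s by omega, show (t - 1).succ = t by omega]; exact h)
  omega

lemma getVert_loop {a : V} (c : G.Walk a a) : c.getVert c.length = c.getVert 0 := by
  rw [SimpleGraph.Walk.getVert_length, SimpleGraph.Walk.getVert_zero]

/-- Injectivity of `getVert` for a cycle, on positions in `[0, length)`. -/
lemma getVert_injOn {a : V} {c : G.Walk a a} (hc : c.IsCycle) :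
    ∀ s t, s < c.length → t < c.length → c.getVert s = c.getVert t → s = t := by
  intro s t hs ht h
  have h3 := hc.three_le_length
  rcases Nat.eq_zero_or_pos s with rfl | hs1 <;> rcases Nat.eq_zero_or_pos t with rfl | ht1
  · rfl
  · have := getVert_injOn_one hc c.length t (by omega) le_rfl ht1 (by omega)
      (by rw [getVert_loop, h])
    omega
  · have := getVert_injOn_one hc s c.length hs1 (by omega) (by omega) le_rfl
      (by rw [getVert_loop, ← h])
    omega
  · exact getVert_injOn_one hc s t hs1 (by omega) ht1 (by omega) h

/-- the walk arc: from `c.getVert i` of length `n`. -/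
def arcW {a : V} (c : G.Walk a a) : (i n : ℕ) → (h : i + n ≤ c.length) →
    G.Walk (c.getVert i) (c.getVert (i + n))
  | _, 0, _ => SimpleGraph.Walk.nil
  | i, n+1, h =>
    SimpleGraph.Walk.cons (c.adj_getVert_succ (by omega))
      ((arcW c (i+1) n (by omega)).copy rfl (congrArg c.getVert (by omega)))

lemma arcW_length {a : V} (c : G.Walk a a) (i n : ℕ) (h : i + n ≤ c.length) :
    (arcW c i n h).length = n := by
  induction n generalizing i with
  | zero => rfl
  | succ n ih => simp [arcW, ih]

lemma arcW_support {a : V} (c : G.Walk a a) (i n : ℕ) (h : i + n ≤ c.length) :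
    (arcW c i n h).support = (List.range (n + 1)).map (fun t => c.getVert (i + t)) := by
  induction n generalizing i with
  | zero =>
    show [c.getVert i] = _
    rw [show (1:ℕ) = 0 + 1 from rfl, List.range_succ, List.range_zero]
    simp
  | succ n ih =>
    rw [List.range_succ_eq_map (n := n + 1), List.map_cons, List.map_map]
    rw [arcW, SimpleGraph.Walk.support_cons, SimpleGraph.Walk.support_copy, ih (i+1) (by omega)]
    congr 1
    apply List.map_congr_left
    intro t ht
    simp only [Function.comp_apply]
    congr 1
    omega

lemma endpoints_ne {x y : V} {p : G.Walk x y} (hp : p.IsPath) (hl : 1 ≤ p.length) : x ≠ y := by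
  rintro rfl
  have := SimpleGraph.Path.loop_eq ⟨p, hp⟩
  have : p = SimpleGraph.Walk.nil := congrArg Subtype.val this
  simp [this] at hl

lemma buildCycle {x y : V} (p : G.Walk x y) (q : G.Walk y x) (hp : p.IsPath) (hq : q.IsPath)
    (hpl : 1 ≤ p.length) (hql : 2 ≤ q.length)
    (hmeet : ∀ z ∈ p.support, z ∈ q.support → z = x ∨ z = y) :
    ∃ w : G.Walk x x, w.IsCycle ∧ w.length = p.length + q.length := by
  cases p with
  | nil => simp at hpl
  | @cons _ x₂ _ hadj p' =>
    have hp' : p'.IsPath := hp.of_cons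
    have hxp' : x ∉ p'.support := ((SimpleGraph.Walk.cons_isPath_iff hadj p').mp hp).2
    refine ⟨SimpleGraph.Walk.cons hadj (p'.append q), ?_, by simp; omega⟩
    rw [SimpleGraph.Walk.cons_isCycle_iff]
    constructor
    · rw [SimpleGraph.Walk.isPath_def, SimpleGraph.Walk.support_append]
      apply List.Nodup.append
      · exact SimpleGraph.Walk.isPath_def _ |>.mp hp'
      · exact ((SimpleGraph.Walk.isPath_def _ |>.mp hq).sublist (List.tail_sublist _))
      · intro z hz1 hz2
        have hzp : z ∈ (SimpleGraph.Walk.cons hadj p').support := by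
          rw [SimpleGraph.Walk.support_cons]; exact List.mem_cons_of_mem _ hz1
        have hzq : z ∈ q.support := List.mem_of_mem_tail hz2
        rcases hmeet z hzp hzq with rfl | rfl
        · exact hxp' hz1
        · have hnd := SimpleGraph.Walk.isPath_def _ |>.mp hq
          rw [SimpleGraph.Walk.support_eq_cons q] at hnd
          exact (List.nodup_cons.mp hnd).1 hz2
    · intro he
      rw [SimpleGraph.Walk.edges_append, List.mem_append] at he
      rcases he with he | he
      · exact hxp' (SimpleGraph.Walk.fst_mem_support_of_mem_edges p' he)
      · have hx2q : x₂ ∈ q.support := SimpleGraph.Walk.snd_mem_support_of_mem_edges q he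
        have hx2p : x₂ ∈ (SimpleGraph.Walk.cons hadj p').support := by
          rw [SimpleGraph.Walk.support_cons]
          exact List.mem_cons_of_mem _ p'.start_mem_support
        rcases hmeet x₂ hx2p hx2q with rfl | rfl
        · exact hadj.ne rfl
        · cases q with
          | nil => simp at hql
          | @cons _ y₂ _ hadj' q'' =>
            rw [SimpleGraph.Walk.edges_cons, List.mem_cons] at he
            have hyq'' : x₂ ∉ q''.support :=
              ((SimpleGraph.Walk.cons_isPath_iff hadj' q'').mp hq).2
            rcases he with he | he
            · rw [Sym2.eq_iff] at he
              rcases he with ⟨rfl, rfl⟩ | ⟨rfl, -⟩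
              · exact (endpoints_ne hp hpl) rfl
              · have : q'' = SimpleGraph.Walk.nil :=
                  congrArg Subtype.val (SimpleGraph.Path.loop_eq ⟨q'', hq.of_cons⟩)
                rw [SimpleGraph.Walk.length_cons, this] at hql
                simp at hql
            · exact hyq'' (SimpleGraph.Walk.snd_mem_support_of_mem_edges q'' he)

/-- Upper bound: graph distance between cycle vertices is at most the cycle distance. -/
lemma dist_le_cycD (hconn : G.Connected) {a : V} (c : G.Walk a a)
    {i j : ℕ} (hi : i < c.length) (hj : j < c.length) :
    G.dist (c.getVert i) (c.getVert j) ≤ cycD c.length i j := by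
  have harc : ∀ s t : ℕ, s + t ≤ c.length →
      G.dist (c.getVert s) (c.getVert (s + t)) ≤ t := by
    intro s t h
    have := SimpleGraph.dist_le (arcW c s t h)
    rwa [arcW_length] at this
  have key : ∀ s t : ℕ, s ≤ t → t < c.length →
      G.dist (c.getVert s) (c.getVert t) ≤ cycD c.length s t := by
    intro s t hst ht
    have h1 : G.dist (c.getVert s) (c.getVert t) ≤ t - s := by
      have := harc s (t - s) (by omega)
      rwa [show s + (t - s) = t by omega] at this
    have h2 : G.dist (c.getVert t) (c.getVert 0) ≤ c.length - t := by
      have := harc t (c.length - t) (by omega)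
      rwa [show t + (c.length - t) = c.length by omega, getVert_loop] at this
    have h3 : G.dist (c.getVert 0) (c.getVert s) ≤ s := by
      have := harc 0 s (by omega)
      rwa [show (0:ℕ) + s = s from by omega] at this
    have h4 := hconn.dist_triangle (u := c.getVert s) (v := c.getVert 0) (w := c.getVert t)
    have h5 : G.dist (c.getVert s) (c.getVert 0) = G.dist (c.getVert 0) (c.getVert s) :=
      SimpleGraph.dist_comm ..
    have h6 : G.dist (c.getVert 0) (c.getVert t) = G.dist (c.getVert t) (c.getVert 0) :=
      SimpleGraph.dist_comm ..
    unfold cycD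
    omega
  rcases le_total i j with h | h
  · exact key i j h hj
  · have := key j i h hi
    rw [SimpleGraph.dist_comm, cycD_comm]
    exact this

/-- If `p` is a path between cycle vertices avoiding the cycle internally,
then `p` cannot be shorter than the cycle distance. -/
lemma noShort (hconn : G.Connected) {a : V} {c : G.Walk a a} (hc : c.IsCycle)
    (hgirth : G.girth = c.length) {i j : ℕ} (hij : i < j) (hj : j < c.length)
    (p : G.Walk (c.getVert i) (c.getVert j)) (hp : p.IsPath) (hpl1 : 1 ≤ p.length)
    (hint : ∀ m, m < c.length → c.getVert m ∈ p.support →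
      c.getVert m = c.getVert i ∨ c.getVert m = c.getVert j)
    (hD : p.length < cycD c.length i j) : False := by
  set g := c.length with hgdef
  have h3 := hc.three_le_length
  have hcycD : cycD g i j = min (j - i) (g - (j - i)) := by unfold cycD; omega
  have hmin2 : 2 ≤ min (j - i) (g - (j - i)) := by omega
  rcases le_or_gt (j - i) (g - (j - i)) with hab | hab
  · -- short side is the direct arc i → j
    set q : G.Walk (c.getVert j) (c.getVert i) :=
      ((arcW c i (j - i) (by omega)).copy rfl (congrArg c.getVert (by omega))).reverse with hqdef
    have hqsup : q.support =
        (((List.range (j - i + 1)).map (fun t => c.getVert (i + t)))).reverse := by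
      rw [hqdef, SimpleGraph.Walk.support_reverse, SimpleGraph.Walk.support_copy, arcW_support]
    have hqlen : q.length = j - i := by
      rw [hqdef, SimpleGraph.Walk.length_reverse, SimpleGraph.Walk.length_copy, arcW_length]
    have hq : q.IsPath := by
      rw [SimpleGraph.Walk.isPath_def, hqsup, List.nodup_reverse,
        List.nodup_map_iff_inj_on List.nodup_range]
      intro s hs t ht hst
      rw [List.mem_range] at hs ht
      have := getVert_injOn hc (i + s) (i + t) (by omega) (by omega) hst
      omega
    have hmeet : ∀ z ∈ p.support, z ∈ q.support → z = c.getVert i ∨ z = c.getVert j := by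
      intro z hz1 hz2
      rw [hqsup, List.mem_reverse, List.mem_map] at hz2
      obtain ⟨t, ht, rfl⟩ := hz2
      rw [List.mem_range] at ht
      have := hint (i + t) (by omega) hz1
      tauto
    obtain ⟨w, hw, hwl⟩ := buildCycle p q hp hq hpl1 (by omega) hmeet
    have hgle := girth_le_of_cycle hw
    rw [hgirth] at hgle
    omega
  · -- short side is the wrap-around arc j → g ≡ 0 → i
    have hj1 : 1 ≤ j := by omega
    set q1 : G.Walk (c.getVert j) (c.getVert 0) :=
      (arcW c j (g - j) (by omega)).copy rfl
        (by rw [show j + (g - j) = c.length by omega, getVert_loop]) with hq1def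
    set q2 : G.Walk (c.getVert 0) (c.getVert i) :=
      (arcW c 0 i (by omega)).copy rfl (congrArg c.getVert (Nat.zero_add i)) with hq2def
    set q : G.Walk (c.getVert j) (c.getVert i) := q1.append q2 with hqdef
    have hq1sup : q1.support = (List.range (g - j + 1)).map (fun t => c.getVert (j + t)) := by
      rw [hq1def, SimpleGraph.Walk.support_copy, arcW_support]
    have hq2sup : q2.support = (List.range (i + 1)).map (fun t => c.getVert (0 + t)) := by
      rw [hq2def, SimpleGraph.Walk.support_copy, arcW_support]
    have hq2tail : q2.support.tail =
        (List.range i).map (fun t => c.getVert (0 + (t + 1))) := by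
      rw [hq2sup, List.range_succ_eq_map, List.map_cons, List.tail_cons, List.map_map]
      rfl
    have hqsup : q.support = (List.range (g - j + 1)).map (fun t => c.getVert (j + t)) ++
        (List.range i).map (fun t => c.getVert (0 + (t + 1))) := by
      rw [hqdef, SimpleGraph.Walk.support_append, hq1sup, hq2tail]
    have hqlen : q.length = (g - j) + i := by
      rw [hqdef, SimpleGraph.Walk.length_append, hq1def, hq2def,
        SimpleGraph.Walk.length_copy, SimpleGraph.Walk.length_copy, arcW_length, arcW_length]
    have hq : q.IsPath := by
      rw [SimpleGraph.Walk.isPath_def, hqsup]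
      apply List.Nodup.append
      · rw [List.nodup_map_iff_inj_on List.nodup_range]
        intro s hs t ht hst
        rw [List.mem_range] at hs ht
        have := getVert_injOn_one hc (j + s) (j + t) (by omega) (by omega) (by omega) (by omega) hst
        omega
      · rw [List.nodup_map_iff_inj_on List.nodup_range]
        intro s hs t ht hst
        rw [List.mem_range] at hs ht
        have := getVert_injOn_one hc (0 + (s+1)) (0 + (t+1)) (by omega) (by omega) (by omega)
          (by omega) hst
        omega
      · intro z hz1 hz2
        rw [List.mem_map] at hz1 hz2
        obtain ⟨s, hs, rfl⟩ := hz1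
        obtain ⟨t, ht, hst⟩ := hz2
        rw [List.mem_range] at hs ht
        have := getVert_injOn_one hc (0 + (t+1)) (j + s) (by omega) (by omega) (by omega)
          (by omega) hst
        omega
    have hmeet : ∀ z ∈ p.support, z ∈ q.support → z = c.getVert i ∨ z = c.getVert j := by
      intro z hz1 hz2
      rw [hqsup, List.mem_append, List.mem_map, List.mem_map] at hz2
      rcases hz2 with ⟨t, ht, rfl⟩ | ⟨t, ht, rfl⟩
      · rw [List.mem_range] at ht
        rcases eq_or_lt_of_le (show j + t ≤ g by omega) with heq | hlt
        · rw [show j + t = c.length from heq, getVert_loop] at hz1 ⊢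
          have := hint 0 (by omega) hz1
          tauto
        · have := hint (j + t) (by omega) hz1
          tauto
      · rw [List.mem_range] at ht
        have := hint (0 + (t + 1)) (by omega) hz1
        tauto
    obtain ⟨w, hw, hwl⟩ := buildCycle p q hp hq hpl1 (by omega) hmeet
    have hgle := girth_le_of_cycle hw
    rw [hgirth] at hgle
    omega

/-- Lower bound: graph distance between cycle vertices is at least the cycle distance. -/
lemma cycD_le_dist [DecidableEq V] (hconn : G.Connected) {a : V} {c : G.Walk a a} (hc : c.IsCycle)
    (hgirth : G.girth = c.length) (d : ℕ) :
    ∀ i j, i < c.length → j < c.length → G.dist (c.getVert i) (c.getVert j) = d →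
      cycD c.length i j ≤ d := by
  induction d using Nat.strong_induction_on with
  | _ d ih =>
  intro i j hi hj hd
  by_cases hij : i = j
  · subst hij; rw [cycD_self]; omega
  have hne : c.getVert i ≠ c.getVert j := fun h => hij (getVert_injOn hc i j hi hj h)
  have hd1 : 1 ≤ d := by
    have := hconn.pos_dist_of_ne hne
    omega
  obtain ⟨p, hp, hpl⟩ := hconn.exists_path_of_dist (c.getVert i) (c.getVert j)
  rw [hd] at hpl
  by_cases hz : ∃ m, m < c.length ∧ c.getVert m ∈ p.support ∧
      c.getVert m ≠ c.getVert i ∧ c.getVert m ≠ c.getVert j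
  · obtain ⟨m, hm, hmp, hmi, hmj⟩ := hz
    have hsplit := p.take_spec hmp
    have hlen : (p.takeUntil _ hmp).length + (p.dropUntil _ hmp).length = d := by
      have h' := congrArg SimpleGraph.Walk.length hsplit
      rw [SimpleGraph.Walk.length_append] at h'
      omega
    have d1 := SimpleGraph.dist_le (p.takeUntil _ hmp)
    have d2 := SimpleGraph.dist_le (p.dropUntil _ hmp)
    have e1 : 0 < G.dist (c.getVert i) (c.getVert m) :=
      hconn.pos_dist_of_ne (fun h => hmi h.symm)
    have e2 : 0 < G.dist (c.getVert m) (c.getVert j) := hconn.pos_dist_of_ne hmj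
    have c1 := ih (G.dist (c.getVert i) (c.getVert m)) (by omega) i m hi hm rfl
    have c2 := ih (G.dist (c.getVert m) (c.getVert j)) (by omega) m j hm hj rfl
    have tri := cycD_triangle (g := c.length) hi hj hm
    exact tri.trans ((add_le_add c1 c2).trans ((add_le_add d1 d2).trans_eq hlen))
  · push_neg at hz
    by_contra hcon
    have hD : d < cycD c.length i j := by omega
    have hint : ∀ m, m < c.length → c.getVert m ∈ p.support →
        c.getVert m = c.getVert i ∨ c.getVert m = c.getVert j := by
      intro m hm hmp
      by_contra hcc
      push_neg at hcc
      exact hcc.2 (hz m hm hmp hcc.1)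
    rcases lt_or_gt_of_ne hij with h | h
    · exact noShort hconn hc hgirth h hj p hp (by omega) hint (by omega)
    · have hint' : ∀ m, m < c.length → c.getVert m ∈ p.reverse.support →
          c.getVert m = c.getVert j ∨ c.getVert m = c.getVert i := by
        intro m hm hmp
        rw [SimpleGraph.Walk.support_reverse, List.mem_reverse] at hmp
        exact (hint m hm hmp).symm
      refine noShort hconn hc hgirth h hi p.reverse hp.reverse ?_ hint' ?_
      · rw [SimpleGraph.Walk.length_reverse]; omega
      · rw [SimpleGraph.Walk.length_reverse, hpl, cycD_comm]
        omega

lemma dist_eq_cycD [DecidableEq V] (hconn : G.Connected) {a : V} {c : G.Walk a a} (hc : c.IsCycle)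
    (hgirth : G.girth = c.length) {i j : ℕ} (hi : i < c.length) (hj : j < c.length) :
    G.dist (c.getVert i) (c.getVert j) = cycD c.length i j :=
  le_antisymm (dist_le_cycD hconn c hi hj) (cycD_le_dist hconn hc hgirth _ i j hi hj rfl)

end MDAux

open MDAux in
theorem stmt5 {V : Type*} [Fintype V] (G : SimpleGraph V)
    (hconn : G.Connected) (hcyc : ¬ G.IsAcyclic)
    (hud : UniquelyDimensional G) (g : ℕ) (hg : G.girth = g) :
    metricDim G ≤ Fintype.card V - g + 1 := by
  classical
  obtain ⟨a, c, hc, hgl⟩ := SimpleGraph.exists_girth_eq_length.mpr hcyc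
  have hglen : c.length = g := by rw [← hg, hgl]
  have h3 : 3 ≤ g := by rw [← hg]; exact SimpleGraph.three_le_girth hcyc
  set n := Fintype.card V with hndef
  set S : Finset V := (Finset.range c.length).image c.getVert with hSdef
  have hinj : ∀ x ∈ Finset.range c.length, ∀ y ∈ Finset.range c.length,
      c.getVert x = c.getVert y → x = y := by
    intro x hx y hy h
    rw [Finset.mem_range] at hx hy
    exact getVert_injOn hc x y hx hy h
  have hScard : S.card = g := by
    rw [hSdef, Finset.card_image_of_injOn hinj, Finset.card_range, hglen]
  have hgn : g ≤ n := by
    rw [← hScard]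
    exact Finset.card_le_univ S
  have hmemS : ∀ k, k < c.length → c.getVert k ∈ S := by
    intro k hk
    rw [hSdef]
    exact Finset.mem_image_of_mem _ (Finset.mem_range.mpr hk)
  -- the candidate resolving sets
  have hW : ∀ k, k + 1 < c.length →
      IsResolvingSet G ((Finset.univ \ S) ∪ {c.getVert k, c.getVert (k+1)}) ∧
      ((Finset.univ \ S) ∪ {c.getVert k, c.getVert (k+1)}).card = n - g + 2 := by
    intro k hk
    constructor
    · intro x y hxy
      by_cases hx : x ∈ (Finset.univ \ S) ∪ {c.getVert k, c.getVert (k+1)}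
      · refine ⟨x, hx, ?_⟩
        rw [SimpleGraph.dist_self]
        have := hconn.pos_dist_of_ne (Ne.symm hxy)
        omega
      by_cases hy : y ∈ (Finset.univ \ S) ∪ {c.getVert k, c.getVert (k+1)}
      · refine ⟨y, hy, ?_⟩
        rw [SimpleGraph.dist_self (G := G) (v := y)]
        have := hconn.pos_dist_of_ne hxy
        omega
      -- both x and y are cycle vertices other than the two landmarks
      rw [Finset.mem_union, Finset.mem_sdiff, not_or, not_and_or] at hx hy
      have hxS : x ∈ S := by
        rcases hx.1 with h | h
        · exact absurd (Finset.mem_univ x) h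
        · exact not_not.mp h
      have hyS : y ∈ S := by
        rcases hy.1 with h | h
        · exact absurd (Finset.mem_univ y) h
        · exact not_not.mp h
      rw [hSdef, Finset.mem_image] at hxS hyS
      obtain ⟨i, hi, rfl⟩ := hxS
      obtain ⟨j, hj, rfl⟩ := hyS
      rw [Finset.mem_range] at hi hj
      have hij : i ≠ j := fun h => hxy (by rw [h])
      have hland := cycD_landmark (g := c.length) (by omega) hk hi hj hij
      rcases hland with h | h
      · refine ⟨c.getVert k, by simp, ?_⟩
        rw [dist_eq_cycD hconn hc hgl hi (by omega), dist_eq_cycD hconn hc hgl hj (by omega)]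
        exact h
      · refine ⟨c.getVert (k+1), by simp, ?_⟩
        rw [dist_eq_cycD hconn hc hgl hi (by omega), dist_eq_cycD hconn hc hgl hj (by omega)]
        exact h
    · have hpair : ({c.getVert k, c.getVert (k+1)} : Finset V) ⊆ S := by
        intro z hz
        rw [Finset.mem_insert, Finset.mem_singleton] at hz
        rcases hz with rfl | rfl
        · exact hmemS k (by omega)
        · exact hmemS (k+1) hk
      have hdisj : Disjoint (Finset.univ \ S) ({c.getVert k, c.getVert (k+1)} : Finset V) := by
        rw [Finset.disjoint_left]
        intro z hz hz2
        rw [Finset.mem_sdiff] at hz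
        exact hz.2 (hpair hz2)
      rw [Finset.card_union_of_disjoint hdisj, Finset.card_sdiff_of_subset (Finset.subset_univ S),
        Finset.card_univ, hScard]
      have hpc : ({c.getVert k, c.getVert (k+1)} : Finset V).card = 2 := by
        rw [Finset.card_insert_of_notMem, Finset.card_singleton]
        rw [Finset.mem_singleton]
        intro h
        have := getVert_injOn hc k (k+1) (by omega) hk h
        omega
      rw [hpc]
  by_contra hcon
  push_neg at hcon
  obtain ⟨hres0, hcard0⟩ := hW 0 (by omega)
  obtain ⟨hres1, hcard1⟩ := hW 1 (by omega)
  have hle : metricDim G ≤ n - g + 2 := Nat.sInf_le ⟨_, hres0, hcard0⟩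
  have heq : metricDim G = n - g + 2 := by omega
  obtain ⟨B, -, huniq⟩ := hud
  have e0 := huniq _ ⟨hres0, by rw [hcard0, heq]⟩
  have e1 := huniq _ ⟨hres1, by rw [hcard1, heq]⟩
  have hWeq := e0.trans e1.symm
  have hmem0 : c.getVert 0 ∈ (Finset.univ \ S) ∪ {c.getVert 0, c.getVert 1} := by simp
  rw [hWeq] at hmem0
  rw [Finset.mem_union, Finset.mem_sdiff, Finset.mem_insert, Finset.mem_singleton] at hmem0
  rcases hmem0 with ⟨-, h⟩ | h | h
  · exact h (hmemS 0 (by omega))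
  · have := getVert_injOn hc 0 1 (by omega) (by omega) h
    omega
  · have := getVert_injOn hc 0 2 (by omega) (by omega) h
    omega
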